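/- Let c > 0 and let α ≥ α' ≥ 0 be real numbers. For a real parameter γ ≥ 0 define the restricted Paley–Wiener space B_c^{(γ)} as the set of f ∈ L²(ℝ) whose Fourier transform f̂ vanishes a.e. outside [−c,c] and satisfies ∫_{−c}^{c} |f̂(ξ)|² (1−(ξ/c)²)^{−γ} dξ < ∞, each f being identified with its continuous representative f(t) = (1/2π)∫_{−c}^{c} e^{itξ} f̂(ξ) dξ. For n ∈ ℕ define λ_n^{(γ)}(c) = sup { inf { 2π ∫_{−1}^{1} |f(t)|² (1−t²)^γ dt / ∫_{−c}^{c} |f̂(ξ)|² (1−(ξ/c)²)^{−γ} dξ : f ∈ S, f ≠ 0 } : S an (n+1)-dimensional subspace of B_c^{(γ)} }. Then for every n ∈ ℕ: λ_n^{(α)}(c) ≤ λ_n^{(α')}(c). -/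

import Mathlib

open MeasureTheory

/-- The continuous representative of the band-limited function with Fourier transform `F`
supported in `[-c,c]`: `f(t) = (1/2π) ∫_{-c}^{c} e^{itξ} F(ξ) dξ`. -/
noncomputable def invTrans (c : ℝ) (F : ℝ → ℂ) (t : ℝ) : ℂ :=
  (1 / (2 * Real.pi)) * ∫ ξ in (-c)..c, Complex.exp (Complex.I * (t * ξ : ℝ)) * F ξ

/-- The restricted Paley–Wiener space `B_c^{(γ)}`, parametrized by the Fourier transforms
`F = f̂` of its elements (each `f` being identified with its continuous representative
`invTrans c F`): `F` vanishes a.e. outside `[-c,c]` and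
`∫_{-c}^{c} |F(ξ)|² (1-(ξ/c)²)^{-γ} dξ < ∞`. -/
def PWspace (c γ : ℝ) : Set (ℝ → ℂ) :=
  {F | (∀ᵐ ξ : ℝ, c < |ξ| → F ξ = 0) ∧
    IntervalIntegrable (fun ξ => ‖F ξ‖ ^ 2 * (1 - (ξ / c) ^ 2) ^ (-γ)) volume (-c) c}

/-- The energy concentration ratio
`2π ∫_{-1}^{1} |f(t)|² (1-t²)^γ dt / ∫_{-c}^{c} |f̂(ξ)|² (1-(ξ/c)²)^{-γ} dξ`. -/
noncomputable def concRatio (c γ : ℝ) (F : ℝ → ℂ) : ℝ :=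
  2 * Real.pi * (∫ t in (-1 : ℝ)..1, ‖invTrans c F t‖ ^ 2 * (1 - t ^ 2) ^ γ) /
    ∫ ξ in (-c)..c, ‖F ξ‖ ^ 2 * (1 - (ξ / c) ^ 2) ^ (-γ)

/-- The eigenvalue `λ_n^{(γ)}(c)`, defined by the max–min principle over
`(n+1)`-dimensional subspaces of the restricted Paley–Wiener space `B_c^{(γ)}`. -/
noncomputable def lamMaxMin (c γ : ℝ) (n : ℕ) : ℝ :=
  sSup {r : ℝ | ∃ S : Submodule ℂ (ℝ → ℂ), Module.finrank ℂ S = n + 1 ∧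
    (S : Set (ℝ → ℂ)) ⊆ PWspace c γ ∧
    r = sInf {x : ℝ | ∃ F ∈ S, F ≠ (0 : ℝ → ℂ) ∧ x = concRatio c γ F}}

namespace PWaux

open Set intervalIntegral

variable {c γ t : ℝ} {F : ℝ → ℂ}

lemma norm_cexp (r : ℝ) : ‖Complex.exp (Complex.I * (r : ℂ))‖ = 1 := by
  rw [Complex.norm_exp]
  simp

lemma ii_exp_iff (c t : ℝ) (F : ℝ → ℂ) :
    IntervalIntegrable (fun ξ => Complex.exp (Complex.I * (t * ξ : ℝ)) * F ξ) volume (-c) c ↔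
      IntervalIntegrable F volume (-c) c := by
  constructor
  · intro h
    have h2 := h.continuousOn_mul (g := fun ξ : ℝ => Complex.exp (-(Complex.I * (t * ξ : ℝ))))
      (Continuous.continuousOn (by fun_prop))
    have h3 : (fun ξ : ℝ => Complex.exp (-(Complex.I * (t * ξ : ℝ))) *
        (Complex.exp (Complex.I * (t * ξ : ℝ)) * F ξ)) = F := by
      funext ξ
      rw [← mul_assoc, ← Complex.exp_add, neg_add_cancel, Complex.exp_zero, one_mul]
    rwa [h3] at h2
  · intro h
    exact h.continuousOn_mul (Continuous.continuousOn (by fun_prop))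

lemma invTrans_of_not (h : ¬ IntervalIntegrable F volume (-c) c) :
    invTrans c F = fun _ => 0 := by
  funext t
  unfold invTrans
  rw [intervalIntegral.integral_undef, mul_zero]
  exact fun hI => h ((ii_exp_iff c t F).mp hI)

lemma continuous_invTrans (h : IntervalIntegrable F volume (-c) c) :
    Continuous (invTrans c F) := by
  unfold invTrans
  apply continuous_const.mul
  apply intervalIntegral.continuous_of_dominated_interval (bound := fun ξ => ‖F ξ‖)
  · intro t
    exact (intervalIntegrable_iff.mp ((ii_exp_iff c t F).mpr h)).aestronglyMeasurable
  · intro t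
    filter_upwards with ξ _
    rw [norm_mul, norm_cexp, one_mul]
  · exact h.norm
  · filter_upwards with ξ _
    fun_prop

lemma base_nonneg (hc : 0 < c) {ξ : ℝ} (h1 : -c ≤ ξ) (h2 : ξ ≤ c) : 0 ≤ 1 - (ξ / c) ^ 2 := by
  have h3 : ξ ^ 2 ≤ c ^ 2 := sq_le_sq' h1 h2
  have h4 : (ξ / c) ^ 2 ≤ 1 := by rw [div_pow, div_le_one (by positivity)]; exact h3
  linarith

lemma base_pos (hc : 0 < c) {ξ : ℝ} (h1 : -c < ξ) (h2 : ξ < c) : 0 < 1 - (ξ / c) ^ 2 := by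
  have h3 : ξ ^ 2 < c ^ 2 := sq_lt_sq' h1 h2
  have h4 : (ξ / c) ^ 2 < 1 := by rw [div_pow, div_lt_one (by positivity)]; exact h3
  linarith

lemma base_le_one (ξ c : ℝ) : 1 - (ξ / c) ^ 2 ≤ 1 := by nlinarith [sq_nonneg (ξ / c)]

lemma ae_mem_Ioo (a b : ℝ) : ∀ᵐ ξ ∂(volume.restrict (Set.Ioc a b)), ξ ∈ Set.Ioo a b := by
  have h2 := Filter.eventuallyEq_set.mp
    (MeasureTheory.Ioo_ae_eq_Ioc (μ := volume) (a := a) (b := b))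
  filter_upwards [ae_restrict_mem measurableSet_Ioc, ae_restrict_of_ae h2] with ξ h3 h4
  exact h4.mpr h3

lemma ae_mem_Ioo' (a b : ℝ) : ∀ᵐ ξ ∂(volume.restrict (Set.Icc a b)), ξ ∈ Set.Ioo a b := by
  have h2 := Filter.eventuallyEq_set.mp
    (MeasureTheory.Ioo_ae_eq_Icc (μ := volume) (a := a) (b := b))
  filter_upwards [ae_restrict_mem measurableSet_Icc, ae_restrict_of_ae h2] with ξ h3 h4
  exact h4.mpr h3

lemma meas_w (c γ : ℝ) : Measurable (fun ξ : ℝ => (1 - (ξ / c) ^ 2) ^ (-γ)) := by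
  fun_prop

lemma aesm_normsq (hc : 0 < c)
    (hi : IntervalIntegrable (fun ξ => ‖F ξ‖ ^ 2 * (1 - (ξ / c) ^ 2) ^ (-γ)) volume (-c) c) :
    AEStronglyMeasurable (fun ξ => ‖F ξ‖ ^ 2) (volume.restrict (Set.Ioc (-c) c)) := by
  have hm := (intervalIntegrable_iff.mp hi).aestronglyMeasurable
  rw [uIoc_of_le (by linarith : -c ≤ c)] at hm
  have hg : AEStronglyMeasurable
      (fun ξ => (‖F ξ‖ ^ 2 * (1 - (ξ / c) ^ 2) ^ (-γ)) * (((1 - (ξ / c) ^ 2) ^ (-γ))⁻¹))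
      (volume.restrict (Set.Ioc (-c) c)) :=
    hm.mul ((meas_w c γ).inv.aestronglyMeasurable)
  refine hg.congr ?_
  filter_upwards [ae_mem_Ioo (-c) c] with ξ hξ
  have hb := base_pos hc hξ.1 hξ.2
  have hw : (1 - (ξ / c) ^ 2) ^ (-γ) ≠ 0 := (Real.rpow_pos_of_pos hb _).ne'
  rw [mul_inv_cancel_right₀ hw]

lemma PW_subset (hc : 0 < c) {α α' : ℝ} (h : α' ≤ α) :
    PWspace c α ⊆ PWspace c α' := by
  rintro F ⟨hv, hi⟩
  refine ⟨hv, ?_⟩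
  have hsm := aesm_normsq hc hi
  rw [intervalIntegrable_iff, uIoc_of_le (by linarith : -c ≤ c)] at hi ⊢
  apply hi.mono' (hsm.mul ((meas_w c α').aestronglyMeasurable))
  filter_upwards [ae_mem_Ioo (-c) c] with ξ hξ
  have hb := base_pos hc hξ.1 hξ.2
  have hle : (1 - (ξ / c) ^ 2) ^ (-α') ≤ (1 - (ξ / c) ^ 2) ^ (-α) :=
    Real.rpow_le_rpow_of_exponent_ge hb (base_le_one ξ c) (by linarith)
  simp only [Pi.mul_apply]
  rw [Real.norm_of_nonneg (mul_nonneg (by positivity) (Real.rpow_nonneg hb.le _))]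
  exact mul_le_mul_of_nonneg_left hle (by positivity)

lemma num_nonneg (c γ : ℝ) (F : ℝ → ℂ) :
    0 ≤ ∫ t in (-1 : ℝ)..1, ‖invTrans c F t‖ ^ 2 * (1 - t ^ 2) ^ γ := by
  apply intervalIntegral.integral_nonneg (by norm_num)
  intro u hu
  have hb : 0 ≤ 1 - u ^ 2 := by nlinarith [hu.1, hu.2]
  exact mul_nonneg (by positivity) (Real.rpow_nonneg hb _)

lemma denom_nonneg (hc : 0 < c) (γ : ℝ) (F : ℝ → ℂ) :
    0 ≤ ∫ ξ in (-c)..c, ‖F ξ‖ ^ 2 * (1 - (ξ / c) ^ 2) ^ (-γ) := by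
  apply intervalIntegral.integral_nonneg (by linarith)
  intro u hu
  exact mul_nonneg (by positivity) (Real.rpow_nonneg (base_nonneg hc hu.1 hu.2) _)

lemma concRatio_nonneg (hc : 0 < c) (γ : ℝ) (F : ℝ → ℂ) : 0 ≤ concRatio c γ F :=
  div_nonneg (mul_nonneg (by positivity) (num_nonneg c γ F)) (denom_nonneg hc γ F)


lemma normsq_intervalIntegrable (hc : 0 < c) (hγ : 0 ≤ γ)
    (hi : IntervalIntegrable (fun ξ => ‖F ξ‖ ^ 2 * (1 - (ξ / c) ^ 2) ^ (-γ)) volume (-c) c) :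
    IntervalIntegrable (fun ξ => ‖F ξ‖ ^ 2) volume (-c) c := by
  have hsm := aesm_normsq hc hi
  rw [intervalIntegrable_iff, uIoc_of_le (by linarith : -c ≤ c)] at hi ⊢
  apply hi.mono' hsm
  filter_upwards [ae_mem_Ioo (-c) c] with ξ hξ
  have hb := base_pos hc hξ.1 hξ.2
  have h1 : (1 : ℝ) ≤ (1 - (ξ / c) ^ 2) ^ (-γ) := by
    have := Real.rpow_le_rpow_of_exponent_ge hb (base_le_one ξ c) (neg_nonpos.mpr hγ)
    rwa [Real.rpow_zero] at this
  rw [Real.norm_of_nonneg (by positivity)]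
  exact le_mul_of_one_le_right (by positivity) h1

lemma sq_le_w_mul (hc : 0 < c) (hγ : 0 ≤ γ)
    (hi : IntervalIntegrable (fun ξ => ‖F ξ‖ ^ 2 * (1 - (ξ / c) ^ 2) ^ (-γ)) volume (-c) c) :
    (∫ ξ in (-c)..c, ‖F ξ‖ ^ 2) ≤
      ∫ ξ in (-c)..c, ‖F ξ‖ ^ 2 * (1 - (ξ / c) ^ 2) ^ (-γ) := by
  apply intervalIntegral.integral_mono_ae_restrict (by linarith : -c ≤ c)
    (normsq_intervalIntegrable hc hγ hi) hi
  filter_upwards [ae_mem_Ioo' (-c) c] with ξ hξ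
  have hb := base_pos hc hξ.1 hξ.2
  have h1 : (1 : ℝ) ≤ (1 - (ξ / c) ^ 2) ^ (-γ) := by
    have := Real.rpow_le_rpow_of_exponent_ge hb (base_le_one ξ c) (neg_nonpos.mpr hγ)
    rwa [Real.rpow_zero] at this
  exact le_mul_of_one_le_right (by positivity) h1

lemma concRatio_le_bound (hc : 0 < c) (hγ : 0 ≤ γ) (hF : F ∈ PWspace c γ) :
    concRatio c γ F ≤ 2 * c / Real.pi := by
  obtain ⟨hv, hi⟩ := hF
  have pi_pos := Real.pi_pos
  set N := ∫ t in (-1 : ℝ)..1, ‖invTrans c F t‖ ^ 2 * (1 - t ^ 2) ^ γ with hNdef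
  set D := ∫ ξ in (-c)..c, ‖F ξ‖ ^ 2 * (1 - (ξ / c) ^ 2) ^ (-γ) with hDdef
  have hcr : concRatio c γ F = 2 * Real.pi * N / D := rfl
  have hDnn : 0 ≤ D := denom_nonneg hc γ F
  have hNnn : 0 ≤ N := num_nonneg c γ F
  have hKnn : 0 ≤ 2 * c / Real.pi := by positivity
  rcases eq_or_lt_of_le hDnn with hD0 | hDpos
  · rw [hcr, ← hD0, div_zero]; exact hKnn
  by_cases hFi : IntervalIntegrable F volume (-c) c
  · have hFn : IntervalIntegrable (fun ξ => ‖F ξ‖) volume (-c) c := hFi.norm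
    have hFsq : IntervalIntegrable (fun ξ => ‖F ξ‖ ^ 2) volume (-c) c :=
      normsq_intervalIntegrable hc hγ hi
    set A := ∫ ξ in (-c)..c, ‖F ξ‖ ^ 2 with hAdef
    set M := ∫ ξ in (-c)..c, ‖F ξ‖ with hMdef
    have hA : A ≤ D := sq_le_w_mul hc hγ hi
    have hAnn : 0 ≤ A := by
      apply intervalIntegral.integral_nonneg (by linarith)
      intro u _; positivity
    have hMnn : 0 ≤ M := by
      apply intervalIntegral.integral_nonneg (by linarith)
      intro u _; positivity
    -- Cauchy-Schwarz via AM-GM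
    have key : ∀ ε : ℝ, 0 < ε → M ≤ ε * A + c / (2 * ε) := by
      intro ε hε
      have h1 : ∀ u ∈ Icc (-c) c, ‖F u‖ ≤ ε * ‖F u‖ ^ 2 + 1 / (4 * ε) := by
        intro u _
        rw [← sub_le_iff_le_add', le_div_iff₀ (by positivity : (0:ℝ) < 4 * ε)]
        nlinarith [sq_nonneg (2 * ε * ‖F u‖ - 1)]
      have h2 : M ≤ ∫ ξ in (-c)..c, (ε * ‖F ξ‖ ^ 2 + 1 / (4 * ε)) :=
        intervalIntegral.integral_mono_on (by linarith) hFn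
          ((hFsq.const_mul ε).add (intervalIntegrable_const)) h1
      have h3 : (∫ ξ in (-c)..c, (ε * ‖F ξ‖ ^ 2 + 1 / (4 * ε)))
          = ε * A + (c - -c) * (1 / (4 * ε)) := by
        rw [intervalIntegral.integral_add (hFsq.const_mul ε) intervalIntegrable_const,
          intervalIntegral.integral_const_mul, intervalIntegral.integral_const, smul_eq_mul]
      have h4 : (c - -c) * (1 / (4 * ε)) = c / (2 * ε) := by
        field_simp; ring
      rw [h3, h4] at h2
      exact h2
    have hCS : M ^ 2 ≤ 2 * c * A := by
      rcases eq_or_lt_of_le hAnn with hA0 | hApos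
      · have hM0 : M ≤ 0 := by
          by_contra hM
          push_neg at hM
          have h5 := key (c / M) (by positivity)
          rw [← hA0] at h5
          have : c / (2 * (c / M)) = M / 2 := by field_simp
          rw [this] at h5
          linarith
        have : M = 0 := le_antisymm hM0 hMnn
        rw [this, ← hA0]; norm_num
      · set ε := Real.sqrt (c / (2 * A)) with hεdef
        have hεpos : 0 < ε := Real.sqrt_pos.mpr (by positivity)
        have hε2 : ε ^ 2 = c / (2 * A) := Real.sq_sqrt (by positivity : (0:ℝ) ≤ c / (2 * A))
        have hε2' : 2 * A * ε ^ 2 = c := by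
          rw [hε2]; field_simp
        have h5 := key ε hεpos
        have h6 : c / (2 * ε) = A * ε := by
          rw [div_eq_iff (by positivity : (2 : ℝ) * ε ≠ 0)]
          nlinarith [hε2']
        rw [h6] at h5
        nlinarith [h5, hMnn, hε2', hApos, hεpos]
    -- pointwise bound on invTrans
    have hbound : ∀ s : ℝ, ‖invTrans c F s‖ ≤ M / (2 * Real.pi) := by
      intro s
      unfold invTrans
      have h1 : (1 / (2 * (Real.pi : ℂ))) = ((1 / (2 * Real.pi) : ℝ) : ℂ) := by
        push_cast; ring
      have h2 : ‖∫ ξ in (-c)..c, Complex.exp (Complex.I * (s * ξ : ℝ)) * F ξ‖ ≤ M := by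
        refine le_trans (intervalIntegral.norm_integral_le_integral_norm (by linarith)) ?_
        apply le_of_eq
        apply intervalIntegral.integral_congr
        intro ξ _
        simp only [norm_mul, norm_cexp, one_mul]
      rw [norm_mul, h1, Complex.norm_real, Real.norm_of_nonneg (by positivity)]
      refine le_trans (mul_le_mul_of_nonneg_left h2 (by positivity)) (le_of_eq (by ring))
    -- numerator bound
    have hN : N ≤ 2 * (M / (2 * Real.pi)) ^ 2 := by
      by_cases hg : IntervalIntegrable
          (fun s => ‖invTrans c F s‖ ^ 2 * (1 - s ^ 2) ^ γ) volume (-1) 1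
      · have h7 : N ≤ ∫ _ in (-1 : ℝ)..1, (M / (2 * Real.pi)) ^ 2 := by
          apply intervalIntegral.integral_mono_on (by norm_num) hg intervalIntegrable_const
          intro u hu
          have hb : 0 ≤ 1 - u ^ 2 := by nlinarith [hu.1, hu.2]
          have hw1 : (1 - u ^ 2) ^ γ ≤ 1 :=
            Real.rpow_le_one hb (by nlinarith [sq_nonneg u]) hγ
          calc ‖invTrans c F u‖ ^ 2 * (1 - u ^ 2) ^ γ
              ≤ ‖invTrans c F u‖ ^ 2 * 1 :=
                mul_le_mul_of_nonneg_left hw1 (by positivity)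
            _ = ‖invTrans c F u‖ ^ 2 := mul_one _
            _ ≤ (M / (2 * Real.pi)) ^ 2 := by
                apply pow_le_pow_left₀ (norm_nonneg _) (hbound u)
        rw [intervalIntegral.integral_const, smul_eq_mul] at h7
        calc N ≤ (1 - (-1 : ℝ)) * (M / (2 * Real.pi)) ^ 2 := h7
          _ = 2 * (M / (2 * Real.pi)) ^ 2 := by ring
      · rw [hNdef, intervalIntegral.integral_undef hg]
        positivity
    -- conclude
    rw [hcr, div_le_div_iff₀ hDpos pi_pos]
    have hN' : 2 * Real.pi ^ 2 * N ≤ M ^ 2 := by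
      have h8 : 2 * (M / (2 * Real.pi)) ^ 2 = M ^ 2 / (2 * Real.pi ^ 2) := by
        field_simp
      rw [h8] at hN
      have := (le_div_iff₀ (by positivity : (0:ℝ) < 2 * Real.pi ^ 2)).mp hN
      linarith
    nlinarith [hN', hCS, hA, hc.le, hDnn]
  · rw [hcr, hNdef, invTrans_of_not hFi]
    simp only [norm_zero]
    norm_num
    positivity


lemma concRatio_mono (hc : 0 < c) {α α' : ℝ} (h0 : 0 ≤ α') (h : α' ≤ α)
    (hF : F ∈ PWspace c α) : concRatio c α F ≤ concRatio c α' F := by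
  have hF' : F ∈ PWspace c α' := PW_subset hc h hF
  obtain ⟨hv, hiα⟩ := hF
  obtain ⟨-, hiα'⟩ := hF'
  set Nα := ∫ t in (-1 : ℝ)..1, ‖invTrans c F t‖ ^ 2 * (1 - t ^ 2) ^ α with hNα
  set Nα' := ∫ t in (-1 : ℝ)..1, ‖invTrans c F t‖ ^ 2 * (1 - t ^ 2) ^ α' with hNα'
  set Dα := ∫ ξ in (-c)..c, ‖F ξ‖ ^ 2 * (1 - (ξ / c) ^ 2) ^ (-α) with hDα
  set Dα' := ∫ ξ in (-c)..c, ‖F ξ‖ ^ 2 * (1 - (ξ / c) ^ 2) ^ (-α') with hDα'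
  have hcrα : concRatio c α F = 2 * Real.pi * Nα / Dα := rfl
  have hcrα' : concRatio c α' F = 2 * Real.pi * Nα' / Dα' := rfl
  have hDα'nn : 0 ≤ Dα' := denom_nonneg hc α' F
  have hDle : Dα' ≤ Dα := by
    apply intervalIntegral.integral_mono_ae_restrict (by linarith : -c ≤ c) hiα' hiα
    filter_upwards [ae_mem_Ioo' (-c) c] with ξ hξ
    have hb := base_pos hc hξ.1 hξ.2
    exact mul_le_mul_of_nonneg_left
      (Real.rpow_le_rpow_of_exponent_ge hb (base_le_one ξ c) (by linarith)) (by positivity)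
  have hwle : ∀ u : ℝ, u ∈ Icc (-1:ℝ) 1 → (1 - u ^ 2 : ℝ) ^ α ≤ (1 - u ^ 2) ^ α' := by
    intro u hu
    have hb : 0 ≤ 1 - u ^ 2 := by nlinarith [hu.1, hu.2]
    rcases eq_or_lt_of_le hb with hb0 | hbpos
    · rw [← hb0]
      rcases eq_or_lt_of_le h0 with h00 | h0pos
      · rw [← h00, Real.rpow_zero]
        exact Real.rpow_le_one le_rfl zero_le_one (by linarith)
      · rw [Real.zero_rpow (by linarith : α ≠ 0), Real.zero_rpow (by linarith : α' ≠ 0)]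
    · exact Real.rpow_le_rpow_of_exponent_ge hbpos (by nlinarith [sq_nonneg u]) h
  have hNle : Nα ≤ Nα' := by
    by_cases hFi : IntervalIntegrable F volume (-c) c
    · have hcont := continuous_invTrans hFi
      have hint : ∀ γ' : ℝ, 0 ≤ γ' → IntervalIntegrable
          (fun s => ‖invTrans c F s‖ ^ 2 * (1 - s ^ 2) ^ γ') volume (-1) 1 := by
        intro γ' hγ'
        apply Continuous.intervalIntegrable
        have w1 : Continuous (fun s : ℝ => (1 - s ^ 2) ^ γ') :=
          (Real.continuous_rpow_const hγ').comp (by continuity)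
        exact (hcont.norm.pow 2).mul w1
      exact intervalIntegral.integral_mono_on (by norm_num) (hint α (by linarith)) (hint α' h0)
        (fun u hu => mul_le_mul_of_nonneg_left (hwle u hu) (by positivity))
    · rw [hNα, hNα', invTrans_of_not hFi]
      simp
  rcases eq_or_lt_of_le hDα'nn with hD'0 | hD'pos
  · have hIoc : ∫ ξ in Ioc (-c) c, ‖F ξ‖ ^ 2 * (1 - (ξ / c) ^ 2) ^ (-α') ∂volume = 0 := by
      rw [← intervalIntegral.integral_of_le (by linarith : -c ≤ c)]
      exact hD'0.symm
    have hii' := intervalIntegrable_iff.mp hiα'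
    rw [uIoc_of_le (by linarith : -c ≤ c)] at hii'
    have hae : (fun ξ => ‖F ξ‖ ^ 2 * (1 - (ξ / c) ^ 2) ^ (-α'))
        =ᵐ[volume.restrict (Ioc (-c) c)] 0 := by
      refine (integral_eq_zero_iff_of_nonneg_ae ?_ hii').mp hIoc
      filter_upwards [ae_mem_Ioo (-c) c] with ξ hξ
      have hb := base_pos hc hξ.1 hξ.2
      exact mul_nonneg (by positivity) (Real.rpow_nonneg hb.le _)
    have hae2 : (fun ξ => ‖F ξ‖ ^ 2 * (1 - (ξ / c) ^ 2) ^ (-α))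
        =ᵐ[volume.restrict (Ioc (-c) c)] 0 := by
      filter_upwards [hae, ae_mem_Ioo (-c) c] with ξ h1 h2
      have hb := base_pos hc h2.1 h2.2
      have hw' : (0:ℝ) < (1 - (ξ / c) ^ 2) ^ (-α') := Real.rpow_pos_of_pos hb _
      simp only [Pi.zero_apply] at h1 ⊢
      have hFz : ‖F ξ‖ ^ 2 = 0 := (mul_eq_zero.mp h1).resolve_right hw'.ne'
      rw [hFz, zero_mul]
    have hDα0 : Dα = 0 := by
      rw [hDα, intervalIntegral.integral_of_le (by linarith : -c ≤ c)]
      exact integral_eq_zero_of_ae hae2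
    rw [hcrα, hcrα', hDα0, ← hD'0, div_zero, div_zero]
  · have hDαpos : 0 < Dα := lt_of_lt_of_le hD'pos hDle
    rw [hcrα, hcrα']
    exact div_le_div₀ (mul_nonneg (by positivity) (num_nonneg c α' F))
      (mul_le_mul_of_nonneg_left hNle (by positivity)) hD'pos hDle

lemma exists_ne_zero (S : Submodule ℂ (ℝ → ℂ)) {n : ℕ} (hrank : Module.finrank ℂ S = n + 1) :
    ∃ F ∈ S, F ≠ (0 : ℝ → ℂ) := by
  rw [← Submodule.ne_bot_iff]
  intro hbot
  rw [hbot] at hrank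
  simp at hrank

end PWaux

/-- Monotonicity of the eigenvalues `λ_n^{(γ)}(c)` with respect to the
parameter: for `α ≥ α' ≥ 0`, `λ_n^{(α)}(c) ≤ λ_n^{(α')}(c)` for every `n`. -/


theorem lam_monotone_in_alpha (c α α' : ℝ) (hc : 0 < c) (h0 : 0 ≤ α') (h : α' ≤ α) :
    ∀ n : ℕ, lamMaxMin c α n ≤ lamMaxMin c α' n := by
  intro n
  set Sa := {r : ℝ | ∃ S : Submodule ℂ (ℝ → ℂ), Module.finrank ℂ S = n + 1 ∧
    (S : Set (ℝ → ℂ)) ⊆ PWspace c α ∧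
    r = sInf {x : ℝ | ∃ F ∈ S, F ≠ (0 : ℝ → ℂ) ∧ x = concRatio c α F}} with hSa
  set Sa' := {r : ℝ | ∃ S : Submodule ℂ (ℝ → ℂ), Module.finrank ℂ S = n + 1 ∧
    (S : Set (ℝ → ℂ)) ⊆ PWspace c α' ∧
    r = sInf {x : ℝ | ∃ F ∈ S, F ≠ (0 : ℝ → ℂ) ∧ x = concRatio c α' F}} with hSa'
  have hla : lamMaxMin c α n = sSup Sa := rfl
  have hla' : lamMaxMin c α' n = sSup Sa' := rfl
  have hub : ∀ r ∈ Sa', r ≤ 2 * c / Real.pi := by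
    rintro r ⟨S, hrank, hsub, rfl⟩
    obtain ⟨F₀, hF₀S, hF₀⟩ := PWaux.exists_ne_zero S hrank
    refine le_trans (csInf_le ⟨0, ?_⟩ ⟨F₀, hF₀S, hF₀, rfl⟩)
      (PWaux.concRatio_le_bound hc h0 (hsub hF₀S))
    rintro x ⟨G, hGS, hG0, rfl⟩
    exact PWaux.concRatio_nonneg hc α' G
  have hbdd : BddAbove Sa' := ⟨2 * c / Real.pi, hub⟩
  rw [hla, hla']
  apply Real.sSup_le
  · rintro r ⟨S, hrank, hsub, rfl⟩
    have hsub' : (S : Set (ℝ → ℂ)) ⊆ PWspace c α' :=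
      fun G hG => PWaux.PW_subset hc h (hsub hG)
    have hmem : sInf {x : ℝ | ∃ F ∈ S, F ≠ (0 : ℝ → ℂ) ∧ x = concRatio c α' F} ∈ Sa' :=
      ⟨S, hrank, hsub', rfl⟩
    refine le_trans ?_ (le_csSup hbdd hmem)
    obtain ⟨F₀, hF₀S, hF₀⟩ := PWaux.exists_ne_zero S hrank
    refine le_csInf ⟨concRatio c α' F₀, F₀, hF₀S, hF₀, rfl⟩ ?_
    rintro b ⟨F, hFS, hF0, rfl⟩
    refine le_trans (csInf_le ⟨0, ?_⟩ ⟨F, hFS, hF0, rfl⟩)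
      (PWaux.concRatio_mono hc h0 h (hsub hFS))
    rintro x ⟨G, hGS, hG0, rfl⟩
    exact PWaux.concRatio_nonneg hc α G
  · rcases Set.eq_empty_or_nonempty Sa' with he | ⟨r', hr'⟩
    · rw [he, Real.sSup_empty]
    · have h0r : 0 ≤ r' := by
        obtain ⟨S, hrank, hsub', rfl⟩ := hr'
        apply Real.sInf_nonneg
        rintro x ⟨F, hFS, hF0, rfl⟩
        exact PWaux.concRatio_nonneg hc α' F
      exact le_trans h0r (le_csSup hbdd hr')
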